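/- For N a power of two, the product of the N commuting Givens rotations G^{(2i-1)(2i)}(π/4) (for i = 1,...,N), each rotating the coordinate pair (2i-1, 2i) by angle π/4, applied to the 2N×2N Hadamard rotation matrix H_{2N}, equals H_N ⊗ I_2: [∏_{i=1}^N G^{(2i-1)(2i)}(π/4)] · H_{2N} = H_N ⊗ I_2. -/

import Mathlib

open Matrix

/-- The 2×2 Hadamard rotation matrix `H₂ = (1/√2)[[1,1],[-1,1]]`. -/
noncomputable def H2 : Matrix (Fin 2) (Fin 2) ℝ :=
  (1 / Real.sqrt 2) • !![1, 1; -1, 1]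

/-- The recursively defined Hadamard rotation matrices
`H_{2^ℓ} = H₂ ⊗ H_{2^{ℓ-1}}` (Kronecker product), with `H_1 = (1)`. -/
noncomputable def Had : (ℓ : ℕ) → Matrix (Fin (2 ^ ℓ)) (Fin (2 ^ ℓ)) ℝ
  | 0 => 1
  | (ℓ + 1) =>
      Matrix.reindex (finProdFinEquiv.trans (finCongr (pow_succ' 2 ℓ).symm))
        (finProdFinEquiv.trans (finCongr (pow_succ' 2 ℓ).symm))
        (Matrix.kroneckerMap (· * ·) H2 (Had ℓ))

/-- The `n×n` Givens rotation matrix acting as `[[cos φ, -sin φ],[sin φ, cos φ]]`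
on the coordinate pair `(a, b)` and as the identity elsewhere. -/
noncomputable def givens (n : ℕ) (a b : Fin n) (φ : ℝ) : Matrix (Fin n) (Fin n) ℝ :=
  fun p q =>
    if p = a ∧ q = a then Real.cos φ
    else if p = a ∧ q = b then -Real.sin φ
    else if p = b ∧ q = a then Real.sin φ
    else if p = b ∧ q = b then Real.cos φ
    else if p = q then 1 else 0



lemma had_apply (ℓ : ℕ) (p q : Fin (2^(ℓ+1))) :
    Had (ℓ+1) p q = H2 ⟨p.val / 2^ℓ, Nat.div_lt_of_lt_mul (by rw [← pow_succ]; exact p.isLt)⟩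
      ⟨q.val / 2^ℓ, Nat.div_lt_of_lt_mul (by rw [← pow_succ]; exact q.isLt)⟩
      * Had ℓ ⟨p.val % 2^ℓ, Nat.mod_lt _ (Nat.two_pow_pos ℓ)⟩
        ⟨q.val % 2^ℓ, Nat.mod_lt _ (Nat.two_pow_pos ℓ)⟩ := rfl

lemma had_succ (m : ℕ) (p q : Fin (2^(m+1))) :
    Had (m+1) p q
      = Had m ⟨p.val / 2, Nat.div_lt_of_lt_mul (by rw [← pow_succ']; exact p.isLt)⟩
          ⟨q.val / 2, Nat.div_lt_of_lt_mul (by rw [← pow_succ']; exact q.isLt)⟩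
        * H2 ⟨p.val % 2, Nat.mod_lt _ (by norm_num)⟩ ⟨q.val % 2, Nat.mod_lt _ (by norm_num)⟩ := by
  induction m with
  | zero =>
      rw [had_apply]
      have e1 : ∀ (r : Fin (2^1)), (⟨r.val / 2^0, Nat.div_lt_of_lt_mul (by rw [← pow_succ]; exact r.isLt)⟩ : Fin 2) = ⟨r.val % 2, Nat.mod_lt _ (by norm_num)⟩ := by
        intro r; have := r.isLt; exact Fin.ext (by simp only []; omega)
      rw [e1 p, e1 q]
      have h0 : ∀ (x y : Fin 1), Had 0 x y = 1 := by
        intro x y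
        have : x = y := Subsingleton.elim x y
        simp [Had, this, Matrix.one_apply]
      rw [h0, h0, mul_one, one_mul]
  | succ n ih =>
      rw [had_apply, ih]
      conv_rhs => rw [had_apply, mul_assoc]
      have hA : ∀ r : ℕ, r % 2^(n+1) / 2 = r / 2 % 2^n := by
        intro r; rw [pow_succ']; exact Nat.mod_mul_right_div_self _ _ _
      have hB : ∀ r : ℕ, r % 2^(n+1) % 2 = r % 2 := by
        intro r; rw [pow_succ']; exact Nat.mod_mul_right_mod _ _ _
      have hC : ∀ r : ℕ, r / 2 / 2^n = r / 2^(n+1) := by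
        intro r; rw [pow_succ']; exact Nat.div_div_eq_div_mul _ _ _
      congr 1
      · congr 1 <;> exact Fin.ext (hC _).symm
      · congr 1
        · congr 1 <;> exact Fin.ext (hA _)
        · congr 1 <;> exact Fin.ext (hB _)

noncomputable def Bmat (d s t : ℕ) : Matrix (Fin d) (Fin d) ℝ := fun p q =>
  if p.val / 2 = q.val / 2 ∧ s ≤ p.val / 2 ∧ p.val / 2 < t then
    (if p.val % 2 = q.val % 2 then Real.cos (Real.pi/4)
     else if p.val % 2 = 0 then -Real.sin (Real.pi/4) else Real.sin (Real.pi/4))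
  else if p = q then 1 else 0

lemma givens_congr {d : ℕ} {a a' b b' : Fin d} (φ : ℝ) (h1 : a = a') (h2 : b = b') :
    givens d a b φ = givens d a' b' φ := by rw [h1, h2]

lemma prodG (d : ℕ) : ∀ (n s : ℕ) (h : 2*(s+n) ≤ d),
    (List.ofFn fun i : Fin n => givens d ⟨2*(s+i.val), by have := i.isLt; omega⟩
      ⟨2*(s+i.val)+1, by have := i.isLt; omega⟩ (Real.pi/4)).prod = Bmat d s (s+n) := by
  intro n
  induction n with
  | zero =>
      intro s h
      ext p q
      simp only [List.ofFn_zero, List.prod_nil, Bmat]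
      rw [if_neg (by omega)]
      simp [Matrix.one_apply]
  | succ n ih =>
      intro s h
      rw [List.ofFn_succ]
      have hrest : (List.ofFn fun i : Fin n => givens d
            ⟨2*(s+(i.succ).val), by have := i.isLt; omega⟩
            ⟨2*(s+(i.succ).val)+1, by have := i.isLt; omega⟩ (Real.pi/4))
          = (List.ofFn fun i : Fin n => givens d ⟨2*((s+1)+i.val), by have := i.isLt; omega⟩
            ⟨2*((s+1)+i.val)+1, by have := i.isLt; omega⟩ (Real.pi/4)) := by
        apply congrArg
        funext i
        exact givens_congr _ (Fin.ext (by simp only [Fin.val_succ]; omega))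
          (Fin.ext (by simp only [Fin.val_succ]; omega))
      have hhead : givens d ⟨2*(s+(0 : Fin (n+1)).val), by omega⟩
            ⟨2*(s+(0 : Fin (n+1)).val)+1, by omega⟩ (Real.pi/4)
          = givens d ⟨2*s, by omega⟩ ⟨2*s+1, by omega⟩ (Real.pi/4) := by
        exact givens_congr _ (Fin.ext (by simp only [Fin.val_zero]; omega))
          (Fin.ext (by simp only [Fin.val_zero]; omega))
      rw [List.prod_cons, hrest, hhead, ih (s+1) (by omega)]
      ext p q
      rw [Matrix.mul_apply]
      set a : Fin d := ⟨2*s, by omega⟩ with ha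
      set b : Fin d := ⟨2*s+1, by omega⟩ with hb
      have hav : a.val = 2*s := rfl
      have hbv : b.val = 2*s+1 := rfl
      by_cases hp : p.val / 2 = s
      · have step1 : ∀ k : Fin d, givens d a b (Real.pi/4) p k * Bmat d (s+1) (s+1+n) k q
            = givens d a b (Real.pi/4) p k * (if k = q then (1:ℝ) else 0) := by
          intro k
          by_cases hk : k.val / 2 = s
          · congr 1
            simp only [Bmat]
            rw [if_neg (by omega)]
          · have hka : k ≠ a := fun e => hk (by rw [e, ha]; omega)
            have hkb : k ≠ b := fun e => hk (by rw [e, hb]; omega)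
            have hpk : p ≠ k := fun e => hk (by rw [← e]; omega)
            have : givens d a b (Real.pi/4) p k = 0 := by
              simp only [givens]
              rw [if_neg (by tauto), if_neg (by tauto), if_neg (by tauto), if_neg (by tauto),
                if_neg hpk]
            rw [this, zero_mul, zero_mul]
        rw [Finset.sum_congr rfl (fun k _ => step1 k)]
        simp only [mul_ite, mul_one, mul_zero]
        rw [Finset.sum_ite_eq' Finset.univ q]
        simp only [Finset.mem_univ, if_true]
        have hpd := p.isLt
        have hqd := q.isLt
        simp only [givens, Bmat, Fin.ext_iff, ha, hb]
        split_ifs <;> first | rfl | omega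
      · have step1 : ∀ k : Fin d, givens d a b (Real.pi/4) p k * Bmat d (s+1) (s+1+n) k q
            = (if p = k then (1:ℝ) else 0) * Bmat d (s+1) (s+1+n) k q := by
          intro k
          congr 1
          have hpa : p ≠ a := fun e => hp (by rw [e, ha]; omega)
          have hpb : p ≠ b := fun e => hp (by rw [e, hb]; omega)
          simp only [givens]
          rw [if_neg (by tauto), if_neg (by tauto), if_neg (by tauto), if_neg (by tauto)]
        rw [Finset.sum_congr rfl (fun k _ => step1 k)]
        simp only [ite_mul, one_mul, zero_mul]
        rw [Finset.sum_ite_eq Finset.univ p]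
        simp only [Finset.mem_univ, if_true]
        simp only [Bmat]
        rw [if_congr (by omega : (p.val/2 = q.val/2 ∧ s+1 ≤ p.val/2 ∧ p.val/2 < s+1+n)
          ↔ (p.val/2 = q.val/2 ∧ s ≤ p.val/2 ∧ p.val/2 < s+(n+1))) rfl rfl]


lemma rhs_apply (m : ℕ) (p q : Fin (2^(m+1))) :
    Matrix.reindex (finProdFinEquiv.trans (finCongr (pow_succ 2 m).symm))
        (finProdFinEquiv.trans (finCongr (pow_succ 2 m).symm))
        (Matrix.kroneckerMap (· * ·) (Had m) (1 : Matrix (Fin 2) (Fin 2) ℝ)) p q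
      = Had m ⟨p.val / 2, Nat.div_lt_of_lt_mul (by rw [← pow_succ']; exact p.isLt)⟩
          ⟨q.val / 2, Nat.div_lt_of_lt_mul (by rw [← pow_succ']; exact q.isLt)⟩
        * (1 : Matrix (Fin 2) (Fin 2) ℝ) ⟨p.val % 2, Nat.mod_lt _ (by norm_num)⟩
          ⟨q.val % 2, Nat.mod_lt _ (by norm_num)⟩ := rfl

/-- for `N = 2^m`, the product of the `N` commuting Givens rotations
`G^{(2i-1)(2i)}(π/4)` applied to the `2N×2N` Hadamard rotation matrix `H_{2N}`
equals `H_N ⊗ I₂`:  `[∏_{i=1}^N G^{(2i-1)(2i)}(π/4)] H_{2N} = H_N ⊗ I₂`. -/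
theorem givens_prod_had (m : ℕ) :
    (List.ofFn fun i : Fin (2 ^ m) =>
        givens (2 ^ (m + 1))
          ⟨2 * i.val, by have := i.isLt; have h := Nat.two_pow_succ m; omega⟩
          ⟨2 * i.val + 1, by have := i.isLt; have h := Nat.two_pow_succ m; omega⟩
          (Real.pi / 4)).prod * Had (m + 1)
      = Matrix.reindex (finProdFinEquiv.trans (finCongr (pow_succ 2 m).symm))
          (finProdFinEquiv.trans (finCongr (pow_succ 2 m).symm))
          (Matrix.kroneckerMap (· * ·) (Had m) (1 : Matrix (Fin 2) (Fin 2) ℝ)) := by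
  have hdd := Nat.two_pow_succ m
  -- convert the list to the prodG normal form
  have hlist : (List.ofFn fun i : Fin (2 ^ m) =>
        givens (2 ^ (m + 1))
          ⟨2 * i.val, by have := i.isLt; have h := Nat.two_pow_succ m; omega⟩
          ⟨2 * i.val + 1, by have := i.isLt; have h := Nat.two_pow_succ m; omega⟩
          (Real.pi / 4))
      = (List.ofFn fun i : Fin (2 ^ m) =>
          givens (2 ^ (m + 1)) ⟨2 * (0 + i.val), by have := i.isLt; omega⟩
            ⟨2 * (0 + i.val) + 1, by have := i.isLt; omega⟩ (Real.pi / 4)) := by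
    apply congrArg
    funext i
    exact givens_congr _ (Fin.ext (by simp)) (Fin.ext (by simp))
  rw [hlist, prodG (2 ^ (m + 1)) (2 ^ m) 0 (by omega)]
  ext p q
  rw [Matrix.mul_apply, rhs_apply]
  have hp2 : p.val / 2 < 2 ^ m := by have := p.isLt; omega
  have hq2 : q.val / 2 < 2 ^ m := by have := q.isLt; omega
  set p0 : Fin (2 ^ (m + 1)) := ⟨2 * (p.val / 2), by omega⟩ with hp0
  set p1 : Fin (2 ^ (m + 1)) := ⟨2 * (p.val / 2) + 1, by omega⟩ with hp1
  have hzero : ∀ k ∈ Finset.univ, k ∉ ({p0, p1} : Finset (Fin (2 ^ (m + 1)))) →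
      Bmat (2 ^ (m + 1)) 0 (0 + 2 ^ m) p k * Had (m + 1) k q = 0 := by
    intro k _ hk
    simp only [Finset.mem_insert, Finset.mem_singleton, not_or] at hk
    obtain ⟨hk0, hk1⟩ := hk
    have hk0' : k.val ≠ 2 * (p.val / 2) := fun e => hk0 (Fin.ext e)
    have hk1' : k.val ≠ 2 * (p.val / 2) + 1 := fun e => hk1 (Fin.ext e)
    have hne : p.val / 2 ≠ k.val / 2 := by omega
    have hpk : p ≠ k := fun e => hne (by rw [e])
    have : Bmat (2 ^ (m + 1)) 0 (0 + 2 ^ m) p k = 0 := by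
      simp only [Bmat]
      rw [if_neg (by tauto), if_neg hpk]
    rw [this, zero_mul]
  rw [← Finset.sum_subset (Finset.subset_univ {p0, p1}) hzero,
    Finset.sum_pair (Fin.ne_of_val_ne (by simp only [hp0, hp1, Fin.val_mk]; omega))]
  rw [had_succ m p0 q, had_succ m p1 q]
  -- identify the Had m index of p0, p1 with that of p
  have e0 : (⟨p0.val / 2, Nat.div_lt_of_lt_mul (by rw [← pow_succ']; exact p0.isLt)⟩ : Fin (2 ^ m))
      = ⟨p.val / 2, hp2⟩ := Fin.ext (by simp only [hp0, Fin.val_mk]; omega)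
  have e1 : (⟨p1.val / 2, Nat.div_lt_of_lt_mul (by rw [← pow_succ']; exact p1.isLt)⟩ : Fin (2 ^ m))
      = ⟨p.val / 2, hp2⟩ := Fin.ext (by simp only [hp1, Fin.val_mk]; omega)
  rw [e0, e1]
  have hb0 : Bmat (2 ^ (m + 1)) 0 (0 + 2 ^ m) p p0
      = (if p.val % 2 = 0 then Real.cos (Real.pi/4) else Real.sin (Real.pi/4)) := by
    simp only [Bmat, hp0, Fin.val_mk]
    rw [if_pos (by omega : _ ∧ _ ∧ _), show 2 * (p.val / 2) % 2 = 0 by omega]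
    split_ifs <;> first | rfl | omega
  have hb1 : Bmat (2 ^ (m + 1)) 0 (0 + 2 ^ m) p p1
      = (if p.val % 2 = 0 then -Real.sin (Real.pi/4) else Real.cos (Real.pi/4)) := by
    simp only [Bmat, hp1, Fin.val_mk]
    rw [if_pos (by omega : _ ∧ _ ∧ _), show (2 * (p.val / 2) + 1) % 2 = 1 by omega]
    split_ifs <;> first | rfl | omega
  rw [hb0, hb1]
  -- H2 entries
  have hm0 : (⟨p0.val % 2, Nat.mod_lt _ (by norm_num)⟩ : Fin 2) = ⟨0, by norm_num⟩ :=
    Fin.ext (by simp only [hp0, Fin.val_mk]; omega)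
  have hm1 : (⟨p1.val % 2, Nat.mod_lt _ (by norm_num)⟩ : Fin 2) = ⟨1, by norm_num⟩ :=
    Fin.ext (by simp only [hp1, Fin.val_mk]; omega)
  rw [hm0, hm1]
  have hs2 : Real.sqrt 2 * Real.sqrt 2 = 2 := Real.mul_self_sqrt (by norm_num)
  have hinv : (1:ℝ) / Real.sqrt 2 = Real.sqrt 2 / 2 := by
    rw [div_eq_div_iff (by positivity) (by norm_num : (2:ℝ) ≠ 0), one_mul, hs2]
  rw [Real.cos_pi_div_four, Real.sin_pi_div_four]
  set A := Had m ⟨p.val / 2, hp2⟩ ⟨q.val / 2, Nat.div_lt_of_lt_mul (by rw [← pow_succ']; exact q.isLt)⟩ with hA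
  clear_value A
  rcases Nat.mod_two_eq_zero_or_one p.val with hpe | hpe <;>
    rcases Nat.mod_two_eq_zero_or_one q.val with hqe | hqe <;>
      simp only [hpe, hqe] <;>
      norm_num [H2, Matrix.smul_apply, Matrix.one_apply, Fin.ext_iff, hinv, smul_eq_mul, hpe, hqe]
  all_goals linear_combination A / 2 * hs2
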